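/- Let M₀ : Matrix (Fin n) (Fin n) ℝ be symmetric and invertible, N₀ : Matrix (Fin n) (Fin q) ℝ, z : Fin q → ℝ, and Σ : Matrix (Fin n) (Fin n) ℝ positive definite. Set V̄ = −M₀⁻¹·(N₀·z). Let (Ω, P) be a probability space and U : Ω → (Fin n → ℝ) a random vector with integrable components and pairwise products, mean V̄, and covariance matrix Σ. Then for every μ : ℝ with 1 + μ ≠ 0, the matrix (1+μ)·M₀ is invertible, V_μ := −((1+μ)·M₀)⁻¹·(((1+μ)·N₀)·z) equals V̄, and E[(U − V_μ)ᵀ Σ⁻¹ (U − V_μ)] = n, a value independent of μ. -/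

import Mathlib

open Matrix MeasureTheory

/-- Claim 2 in the proof of Theorem 1: for the perturbation direction equal to
the true parameter, i.e. `M_μ = (1+μ) M₀` and `N_μ = (1+μ) N₀`, every scaling
`1 + μ ≠ 0` yields `V_μ = V̄` and the same expected quadratic cost `n`. -/
theorem method3_scale_invariance
    (n q : ℕ) (M₀ : Matrix (Fin n) (Fin n) ℝ)
    (hM₀symm : M₀.IsSymm) (hM₀inv : IsUnit M₀.det)
    (N₀ : Matrix (Fin n) (Fin q) ℝ) (z : Fin q → ℝ)
    (S : Matrix (Fin n) (Fin n) ℝ) (hS : S.PosDef)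
    (Vbar : Fin n → ℝ) (hVbar : Vbar = -(M₀⁻¹.mulVec (N₀.mulVec z)))
    {Ω : Type*} [MeasurableSpace Ω] (P : Measure Ω) [IsProbabilityMeasure P]
    (U : Ω → Fin n → ℝ)
    (hint : ∀ i, Integrable (fun ω => U ω i) P)
    (hint2 : ∀ i j, Integrable (fun ω => U ω i * U ω j) P)
    (hmean : ∀ i, ∫ ω, U ω i ∂P = Vbar i)
    (hcov : ∀ i j, ∫ ω, (U ω i - Vbar i) * (U ω j - Vbar j) ∂P = S i j) :
    ∀ μ : ℝ, 1 + μ ≠ 0 →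
      IsUnit ((1 + μ) • M₀).det ∧
      -(((1 + μ) • M₀)⁻¹.mulVec (((1 + μ) • N₀).mulVec z)) = Vbar ∧
      ∫ ω, dotProduct (U ω - -(((1 + μ) • M₀)⁻¹.mulVec (((1 + μ) • N₀).mulVec z)))
          (S⁻¹.mulVec
            (U ω - -(((1 + μ) • M₀)⁻¹.mulVec (((1 + μ) • N₀).mulVec z)))) ∂P
        = (n : ℝ) := by
  intro μ hμ
  have hdet : IsUnit ((1 + μ) • M₀).det := by
    rw [Matrix.det_smul, Fintype.card_fin]
    exact ((isUnit_iff_ne_zero.mpr hμ).pow n).mul hM₀inv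
  have hinv : ((1 + μ) • M₀)⁻¹ = (1 + μ)⁻¹ • M₀⁻¹ := by
    apply Matrix.inv_eq_right_inv
    rw [Matrix.smul_mul, Matrix.mul_smul, smul_smul, mul_inv_cancel₀ hμ, one_smul,
      Matrix.mul_nonsing_inv _ hM₀inv]
  have hV : -(((1 + μ) • M₀)⁻¹.mulVec (((1 + μ) • N₀).mulVec z)) = Vbar := by
    rw [hinv, hVbar]
    rw [Matrix.smul_mulVec, Matrix.smul_mulVec, Matrix.mulVec_smul,
      smul_smul, inv_mul_cancel₀ hμ, one_smul]
  refine ⟨hdet, hV, ?_⟩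
  rw [hV]
  -- integrability of centered products
  have key : ∀ i j, Integrable (fun ω => (U ω i - Vbar i) * (U ω j - Vbar j)) P := by
    intro i j
    have h : (fun ω => (U ω i - Vbar i) * (U ω j - Vbar j))
        = fun ω => U ω i * U ω j - Vbar i * U ω j - U ω i * Vbar j + Vbar i * Vbar j := by
      funext ω; ring
    rw [h]
    exact (((hint2 i j).sub ((hint j).const_mul _)).sub ((hint i).mul_const _)).add
      (integrable_const _)
  have hpt : ∀ ω, dotProduct (U ω - Vbar) (S⁻¹.mulVec (U ω - Vbar))
      = ∑ i, ∑ j, S⁻¹ i j * ((U ω i - Vbar i) * (U ω j - Vbar j)) := by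
    intro ω
    simp only [dotProduct, Matrix.mulVec, Pi.sub_apply, Finset.mul_sum]
    exact Finset.sum_congr rfl fun i _ => Finset.sum_congr rfl fun j _ => by ring
  calc ∫ ω, dotProduct (U ω - Vbar) (S⁻¹.mulVec (U ω - Vbar)) ∂P
      = ∫ ω, ∑ i, ∑ j, S⁻¹ i j * ((U ω i - Vbar i) * (U ω j - Vbar j)) ∂P := by
        simp_rw [hpt]
    _ = ∑ i, ∑ j, S⁻¹ i j * S i j := by
        refine (integral_finset_sum _ fun i _ =>
          integrable_finset_sum _ fun j _ => (key i j).const_mul _).trans ?_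
        refine Finset.sum_congr rfl fun i _ => ?_
        refine (integral_finset_sum _ fun j _ => (key i j).const_mul _).trans ?_
        exact Finset.sum_congr rfl fun j _ => by rw [MeasureTheory.integral_const_mul, hcov i j]
    _ = (S⁻¹ * S).trace := by
        rw [Matrix.trace]
        refine Finset.sum_congr rfl fun i _ => ?_
        simp only [Matrix.diag_apply, Matrix.mul_apply]
        refine Finset.sum_congr rfl fun j _ => ?_
        have hsym : S j i = S i j := by
          have := congrFun (congrFun hS.isHermitian.eq i) j
          simpa [Matrix.conjTranspose_apply] using this
        rw [hsym]
    _ = (n : ℝ) := by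
        rw [Matrix.nonsing_inv_mul S (isUnit_iff_ne_zero.mpr hS.det_pos.ne'),
          Matrix.trace_one]
        simp
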